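/- Consider power series mixands: π_θ(k) = a_k θ^k / Z(θ) for θ ∈ Θ ⊆ [0,R) and k ∈ ℤ≥0. Then assumption (A1) — i.e. (Π1_k)_{k≥0} is a linearly independent sequence of functions in L²(ν) ∩ L¹(ν) — holds if and only if both: (i) ∫_Θ θ^k / Z(θ) ν(dθ) < ∞ for every nonnegative integer k, and (ii) ν is not a finite sum of point masses. -/

import Mathlib

/- Proposition 6 of Roueff–Rydén: for power series mixands `π_θ(k) = a_k θ^k / Z(θ)` on a
Borel set `Θ ⊆ [0,R)` (`R` the radius of convergence of `Z(t) = Σ_k a_k t^k`, `a_k > 0`,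
`a_0 = 1`) and a Radon measure `ν` on `Θ`, assumption (A1) — i.e. `(Π1_k)_{k≥0}` is a
linearly independent sequence in `L²(ν) ∩ L¹(ν)` — holds iff both
(i) `∫_Θ θ^k/Z(θ) ν(dθ) < ∞` for every `k`, and (ii) `ν` is not a finite sum of point
masses. -/

open MeasureTheory ENNReal

/-- a.e. properties hold at atoms. -/
private lemma ae_at_atom {α : Type*} [MeasurableSpace α] {ν : Measure α} {p : α → Prop}
    (h : ∀ᵐ x ∂ν, p x) {x : α} (hx : ν {x} ≠ 0) : p x := by
  by_contra hpx
  exact hx (measure_mono_null (Set.singleton_subset_iff.mpr hpx) (MeasureTheory.ae_iff.mp h))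

/-- a measure vanishing outside a finite set is a finite sum of point masses. -/
private lemma measure_eq_sum_dirac {α : Type*} [MeasurableSpace α] [MeasurableSingletonClass α]
    (μ : Measure α) (T : Finset α) (h : μ ((↑T : Set α)ᶜ) = 0) :
    μ = ∑ x ∈ T, μ {x} • Measure.dirac x := by
  ext A hA
  have hTm : MeasurableSet (↑T : Set α) := (T.finite_toSet).measurableSet
  have h1 : μ A = μ (A ∩ ↑T) := by
    have : μ (A \ ↑T) = 0 := measure_mono_null (Set.diff_subset_compl A ↑T) h
    calc μ A = μ (A ∩ ↑T) + μ (A \ ↑T) := (measure_inter_add_diff A hTm).symm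
    _ = μ (A ∩ ↑T) := by rw [this, add_zero]
  have h2 : A ∩ ↑T = ⋃ x ∈ T, A ∩ {x} := by
    ext y; simp [and_comm]
  have h3 : μ (A ∩ ↑T) = ∑ x ∈ T, μ (A ∩ {x}) := by
    rw [h2]
    refine measure_biUnion_finset ?_ fun b _ => hA.inter (measurableSet_singleton b)
    intro x _ y _ hxy
    refine Set.disjoint_left.mpr ?_
    rintro z ⟨_, hz1⟩ ⟨_, hz2⟩
    exact hxy (by simp_all)
  rw [h1, h3, Measure.finset_sum_apply]
  refine Finset.sum_congr rfl fun x _ => ?_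
  rw [Measure.smul_apply, smul_eq_mul, Measure.dirac_apply' x hA]
  by_cases hx : x ∈ A
  · rw [Set.inter_eq_self_of_subset_right (Set.singleton_subset_iff.mpr hx)]
    simp [Set.indicator_of_mem hx]
  · have : A ∩ {x} = ∅ := by
      ext y; simp only [Set.mem_inter_iff, Set.mem_singleton_iff, Set.mem_empty_iff_false,
        iff_false]
      rintro ⟨hy, rfl⟩; exact hx hy
    simp [this, Set.indicator_of_notMem hx]

/-- coercion of a finite sum in `Lp`. -/
private lemma Lp_coeFn_finset_sum {α ι : Type*} [MeasurableSpace α] {μ : Measure α}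
    (s : Finset ι) (f : ι → Lp ℝ 2 μ) :
    ⇑(∑ i ∈ s, f i) =ᵐ[μ] fun x => ∑ i ∈ s, f i x := by
  classical
  induction s using Finset.induction_on with
  | empty => simp only [Finset.sum_empty]; exact Lp.coeFn_zero ℝ 2 μ
  | insert _ _ hx ih =>
    rename_i a s
    rw [Finset.sum_insert hx]
    filter_upwards [Lp.coeFn_add (f a) (∑ i ∈ s, f i), ih] with x h1 h2
    simp only [Finset.sum_insert hx, h1, Pi.add_apply, h2]

theorem statement9
    (a : ℕ → ℝ) (ha_pos : ∀ k, 0 < a k) (ha0 : a 0 = 1)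
    (R : ℝ≥0∞) (hR_pos : 0 < R)
    (hR_radius : ∀ t : ℝ, 0 ≤ t →
      (ENNReal.ofReal t < R → Summable fun k => a k * t ^ k) ∧
      (R < ENNReal.ofReal t → ¬ Summable fun k => a k * t ^ k))
    (Θ : Set ℝ) (hΘ_meas : MeasurableSet Θ)
    (hΘ_sub : ∀ t ∈ Θ, 0 ≤ t ∧ ENNReal.ofReal t < R)
    (ν : Measure Θ) [SigmaFinite ν] :
    -- (A1): the functions θ ↦ π_θ(k) belong to L²(ν) ∩ L¹(ν)
    -- and are linearly independent in H = L²(ν)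
    ((∃ Pi1 : ℕ → Lp ℝ 2 ν,
        (∀ k, ⇑(Pi1 k) =ᵐ[ν]
          fun θ => a k * (θ : ℝ) ^ k / ∑' j : ℕ, a j * (θ : ℝ) ^ j) ∧
        LinearIndependent ℝ Pi1) ∧
      (∀ k, Integrable
        (fun θ : Θ => a k * (θ : ℝ) ^ k / ∑' j : ℕ, a j * (θ : ℝ) ^ j) ν))
    ↔
    ((∀ k : ℕ, Integrable
        (fun θ : Θ => (θ : ℝ) ^ k / ∑' j : ℕ, a j * (θ : ℝ) ^ j) ν) ∧
      ¬ ∃ (s : Finset Θ) (c : Θ → ℝ≥0∞), ν = ∑ θ ∈ s, c θ • Measure.dirac θ) := by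
  classical
  -- notation and basic facts about Z
  set Z : Θ → ℝ := fun θ => ∑' j : ℕ, a j * (θ : ℝ) ^ j with hZ_def
  have hθ0 : ∀ θ : Θ, (0:ℝ) ≤ (θ : ℝ) := fun θ => (hΘ_sub θ θ.2).1
  have hterm_nonneg : ∀ (θ : Θ) (j : ℕ), 0 ≤ a j * (θ : ℝ) ^ j :=
    fun θ j => mul_nonneg (ha_pos j).le (pow_nonneg (hθ0 θ) j)
  have hsum : ∀ θ : Θ, Summable fun k => a k * (θ : ℝ) ^ k :=
    fun θ => (hR_radius θ (hθ0 θ)).1 (hΘ_sub θ θ.2).2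
  have hZ1 : ∀ θ : Θ, (1:ℝ) ≤ Z θ := by
    intro θ
    have := Summable.le_tsum (hsum θ) 0 (fun j _ => hterm_nonneg θ j)
    simpa [ha0] using this
  have hZpos : ∀ θ : Θ, (0:ℝ) < Z θ := fun θ => lt_of_lt_of_le one_pos (hZ1 θ)
  have hle : ∀ (k : ℕ) (θ : Θ), a k * (θ : ℝ) ^ k ≤ Z θ :=
    fun k θ => Summable.le_tsum (hsum θ) k (fun j _ => hterm_nonneg θ j)
  have hmeasZ : Measurable Z := by
    have heq : Z = fun θ : Θ => (∑' j : ℕ, ENNReal.ofReal (a j * (θ : ℝ) ^ j)).toReal := by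
      funext θ
      rw [← ENNReal.ofReal_tsum_of_nonneg (hterm_nonneg θ) (hsum θ),
        ENNReal.toReal_ofReal (tsum_nonneg (hterm_nonneg θ))]
    rw [heq]
    exact (Measurable.ennreal_tsum fun j =>
      (measurable_const.mul (measurable_subtype_coe.pow_const j)).ennreal_ofReal).ennreal_toReal
  have hmeasf : ∀ k : ℕ, Measurable fun θ : Θ => a k * (θ : ℝ) ^ k / Z θ :=
    fun k => (measurable_const.mul (measurable_subtype_coe.pow_const k)).div hmeasZ
  have hf_nonneg : ∀ (k : ℕ) (θ : Θ), 0 ≤ a k * (θ : ℝ) ^ k / Z θ :=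
    fun k θ => div_nonneg (hterm_nonneg θ k) (hZpos θ).le
  have hf_le_one : ∀ (k : ℕ) (θ : Θ), a k * (θ : ℝ) ^ k / Z θ ≤ 1 :=
    fun k θ => (div_le_one (hZpos θ)).mpr (hle k θ)
  constructor
  · rintro ⟨⟨Pi1, hPi, hLI⟩, hInt⟩
    constructor
    · intro k
      have heq : (fun θ : Θ => (θ : ℝ) ^ k / Z θ)
          = fun θ : Θ => (a k)⁻¹ * (a k * (θ : ℝ) ^ k / Z θ) := by
        funext θ
        rw [mul_div_assoc', ← mul_assoc, inv_mul_cancel₀ (ha_pos k).ne', one_mul]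
      rw [show (fun θ : Θ => (θ : ℝ) ^ k / ∑' j : ℕ, a j * (θ : ℝ) ^ j)
          = fun θ : Θ => (θ : ℝ) ^ k / Z θ from rfl, heq]
      exact (hInt k).const_mul _
    · rintro ⟨s, c, hνeq⟩
      -- build an injective linear map into a finite-dimensional space
      have hadd : ∀ (f g : Lp ℝ 2 ν) (x : Θ), ν {x} ≠ 0 → (f + g) x = f x + g x := by
        intro f g x hx
        exact ae_at_atom (Lp.coeFn_add f g) hx
      have hsmul : ∀ (r : ℝ) (f : Lp ℝ 2 ν) (x : Θ), ν {x} ≠ 0 → (r • f) x = r * f x := by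
        intro r f x hx
        exact ae_at_atom (Lp.coeFn_smul r f) hx
      let L : Lp ℝ 2 ν →ₗ[ℝ] (↥s → ℝ) :=
        { toFun := fun f x => if ν {(x : Θ)} ≠ 0 then f (x : Θ) else 0
          map_add' := by
            intro f g
            funext x
            show (if ν {(x : Θ)} ≠ 0 then (f + g) (x : Θ) else 0)
              = (if ν {(x : Θ)} ≠ 0 then f (x : Θ) else 0)
                + (if ν {(x : Θ)} ≠ 0 then g (x : Θ) else 0)
            by_cases hx : ν {(x : Θ)} ≠ 0
            · rw [if_pos hx, if_pos hx, if_pos hx, hadd f g _ hx]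
            · rw [if_neg hx, if_neg hx, if_neg hx, add_zero]
          map_smul' := by
            intro r f
            funext x
            show (if ν {(x : Θ)} ≠ 0 then (r • f) (x : Θ) else 0)
              = r • (if ν {(x : Θ)} ≠ 0 then f (x : Θ) else 0)
            rw [smul_eq_mul]
            by_cases hx : ν {(x : Θ)} ≠ 0
            · rw [if_pos hx, if_pos hx, hsmul r f _ hx]
            · rw [if_neg hx, if_neg hx, mul_zero] }
      have hker : LinearMap.ker L = ⊥ := by
        rw [LinearMap.ker_eq_bot']
        intro f hf
        have hf' : ∀ x : Θ, x ∈ s → ν {x} ≠ 0 → f x = 0 := by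
          intro x hxs hx
          have := congrFun hf ⟨x, hxs⟩
          simpa [L, hx] using this
        have hBmeas : MeasurableSet {θ : Θ | f θ ≠ 0} :=
          ((Lp.stronglyMeasurable f).measurable (measurableSet_singleton 0).compl)
        have hB : ν {θ : Θ | f θ ≠ 0} = 0 := by
          rw [show ν {θ : Θ | f θ ≠ 0} = (∑ x ∈ s, c x • Measure.dirac x) {θ : Θ | f θ ≠ 0}
            from congrArg (fun μ : Measure Θ => μ _) hνeq, Measure.finset_sum_apply]
          refine Finset.sum_eq_zero fun x hxs => ?_
          by_cases hx : ν {x} = 0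
          · refine le_antisymm ?_ zero_le
            have h1 : (c x • Measure.dirac x) {θ : Θ | f θ ≠ 0} ≤ (c x • Measure.dirac x) {x}
                + 0 := by
              rw [add_zero, Measure.smul_apply, Measure.smul_apply, smul_eq_mul, smul_eq_mul]
              refine mul_le_mul_right ?_ _
              rw [Measure.dirac_apply' x (measurableSet_singleton x)]
              simp only [Set.indicator_of_mem (Set.mem_singleton x), Pi.one_apply]
              exact prob_le_one
            have h2 : (c x • Measure.dirac x) {x} ≤ ν {x} := by
              rw [show ν {x} = (∑ y ∈ s, c y • Measure.dirac y) ({x} : Set Θ)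
                from congrArg (fun μ : Measure Θ => μ _) hνeq, Measure.finset_sum_apply]
              exact Finset.single_le_sum (f := fun y => (c y • Measure.dirac y) {x})
                (fun y _ => zero_le) hxs
            calc (c x • Measure.dirac x) {θ : Θ | f θ ≠ 0}
                ≤ (c x • Measure.dirac x) {x} + 0 := h1
              _ = (c x • Measure.dirac x) {x} := add_zero _
              _ ≤ ν {x} := h2
              _ = 0 := hx
          · have hfx : f x = 0 := hf' x hxs hx
            rw [Measure.smul_apply, Measure.dirac_apply' x hBmeas]
            have : x ∉ {θ : Θ | f θ ≠ 0} := by simp [hfx]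
            simp [Set.indicator_of_notMem this]
        have : ⇑f =ᵐ[ν] (0 : Θ → ℝ) := by
          rw [Filter.EventuallyEq, ae_iff]
          simpa using hB
        exact Lp.ext (this.trans (Lp.coeFn_zero ℝ 2 ν).symm)
      have hLI2 : LinearIndependent ℝ (⇑L ∘ Pi1) := hLI.map' L hker
      exact absurd hLI2 (Module.Finite.not_linearIndependent_of_infinite _)
  · rintro ⟨hInt, hnd⟩
    have hInt' : ∀ k, Integrable (fun θ : Θ => a k * (θ : ℝ) ^ k / Z θ) ν := by
      intro k
      have := (hInt k).const_mul (a k)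
      have heq : (fun θ : Θ => a k * ((θ : ℝ) ^ k / Z θ))
          = fun θ : Θ => a k * (θ : ℝ) ^ k / Z θ := by
        funext θ; rw [mul_div_assoc]
      rwa [heq] at this
    have hmem : ∀ k, MemLp (fun θ : Θ => a k * (θ : ℝ) ^ k / Z θ) 2 ν := by
      intro k
      refine (memLp_two_iff_integrable_sq (hmeasf k).aestronglyMeasurable).mpr ?_
      refine (hInt' k).mono ((hmeasf k).pow_const 2).aestronglyMeasurable ?_
      refine Filter.Eventually.of_forall fun θ => ?_
      have h0 := hf_nonneg k θ
      have h1 := hf_le_one k θ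
      rw [Real.norm_eq_abs, Real.norm_eq_abs, abs_of_nonneg (pow_nonneg h0 2),
        abs_of_nonneg h0, pow_two]
      nlinarith
    set F : ℕ → Lp ℝ 2 ν := fun k => (hmem k).toLp _ with hF_def
    refine ⟨⟨F, fun k => (hmem k).coeFn_toLp, ?_⟩, hInt'⟩
    rw [linearIndependent_iff']
    intro s g hsum0 i hi
    by_contra hgi
    -- the a.e. identity
    have hcoe : ∀ᵐ (θ : Θ) ∂ν, ∀ j ∈ s, (⇑(g j • F j)) θ
        = g j * (a j * (θ : ℝ) ^ j / Z θ) := by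
      refine (MeasureTheory.ae_ball_iff s.countable_toSet).mpr fun j _ => ?_
      filter_upwards [Lp.coeFn_smul (g j) (F j), (hmem j).coeFn_toLp] with θ h1 h2
      rw [h1, Pi.smul_apply, hF_def, h2, smul_eq_mul]
    have hae : ∀ᵐ (θ : Θ) ∂ν, ∑ j ∈ s, g j * (a j * (θ : ℝ) ^ j / Z θ) = 0 := by
      have h0 : ⇑(∑ j ∈ s, g j • F j) =ᵐ[ν] (0 : Θ → ℝ) := by
        rw [hsum0]; exact Lp.coeFn_zero ℝ 2 ν
      filter_upwards [Lp_coeFn_finset_sum s (fun j => g j • F j), hcoe, h0]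
        with θ h1 h2 h3
      rw [← Finset.sum_congr rfl (fun j hj => h2 j hj), ← h1, h3, Pi.zero_apply]
    -- translate to a polynomial identity
    set P : Polynomial ℝ := ∑ j ∈ s, Polynomial.C (g j * a j) * Polynomial.X ^ j with hP_def
    have hPeval : ∀ x : ℝ, P.eval x = ∑ j ∈ s, g j * a j * x ^ j := by
      intro x
      rw [hP_def, Polynomial.eval_finset_sum]
      simp
    have hPne : P ≠ 0 := by
      intro h
      apply hgi
      have hc : P.coeff i = g i * a i := by
        rw [hP_def, Polynomial.finset_sum_coeff]
        have : ∀ j ∈ s, (Polynomial.C (g j * a j) * Polynomial.X ^ j).coeff i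
            = if i = j then g j * a j else 0 := by
          intro j _
          rw [Polynomial.coeff_C_mul, Polynomial.coeff_X_pow, mul_ite, mul_one, mul_zero]
        rw [Finset.sum_congr rfl this, Finset.sum_ite_eq, if_pos hi]
      rw [h, Polynomial.coeff_zero] at hc
      rcases mul_eq_zero.mp hc.symm with h' | h'
      · exact h'
      · exact absurd h' (ha_pos i).ne'
    have hroots : {x : ℝ | P.IsRoot x}.Finite := Polynomial.finite_setOf_isRoot hPne
    have hTfin : (Subtype.val ⁻¹' {x : ℝ | P.IsRoot x} : Set Θ).Finite :=
      hroots.preimage (Set.injOn_of_injective Subtype.val_injective)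
    have hT0 : ν ((Subtype.val ⁻¹' {x : ℝ | P.IsRoot x} : Set Θ))ᶜ = 0 := by
      have : ∀ᵐ θ ∂ν, θ ∈ (Subtype.val ⁻¹' {x : ℝ | P.IsRoot x} : Set Θ) := by
        filter_upwards [hae] with θ hθ
        have hsum_eq : ∑ j ∈ s, g j * (a j * (θ : ℝ) ^ j / Z θ)
            = (∑ j ∈ s, g j * a j * (θ : ℝ) ^ j) / Z θ := by
          rw [Finset.sum_div]
          refine Finset.sum_congr rfl fun j _ => ?_
          ring
        rw [hsum_eq] at hθ
        have : (∑ j ∈ s, g j * a j * (θ : ℝ) ^ j) = 0 := by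
          rcases div_eq_zero_iff.mp hθ with h | h
          · exact h
          · exact absurd h (hZpos θ).ne'
        show P.IsRoot (θ : ℝ)
        rw [Polynomial.IsRoot, hPeval]
        exact this
      rw [ae_iff] at this
      rw [Set.compl_def]
      exact this
    exact hnd ⟨hTfin.toFinset, fun θ => ν {θ},
      by simpa using measure_eq_sum_dirac ν hTfin.toFinset (by rw [Set.Finite.coe_toFinset]; exact hT0)⟩
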